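/- Let n be a natural number, Rhat in SO(3), E and deltaB real 3xn matrices with columns e^i and deltab^i, W = diag(w^1, ..., w^n) a real diagonal nxn matrix, and Ltilde any real 3x3 matrix. Then for xi in R^3, the equation hat(xi) * Rhat^T * Ltilde + Ltilde^T * Rhat * hat(xi) = deltaB * W * E^T * Rhat - Rhat^T * E * W * deltaB^T holds if and only if ( trace(Rhat^T * Ltilde) * I_3 - Rhat^T * Ltilde ) * xi = sum over i of w^i * hat(Rhat^T e^i) * deltab^i. (Theorem 7: first-order relation between the attitude error of the Wahba-optimal attitude and the vector measurement errors, left-invariant error case.) -/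
import Mathlib


open Matrix

noncomputable section

/-- `SO3 R` means `R` is a rotation matrix: `Rᵀ R = I₃` and `det R = 1`. -/
def SO3 (R : Matrix (Fin 3) (Fin 3) ℝ) : Prop :=
  Rᵀ * R = 1 ∧ R.det = 1

/-- The hat map sending `w ∈ ℝ³` to the skew-symmetric matrix
`[[0,-w3,w2],[w3,0,-w1],[-w2,w1,0]]`. -/
def hat (w : Fin 3 → ℝ) : Matrix (Fin 3) (Fin 3) ℝ :=
  !![0, -w 2, w 1; w 2, 0, -w 0; -w 1, w 0, 0]

lemma hat_eq_iff (u v : Fin 3 → ℝ) : hat u = hat v ↔ u = v := by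
  constructor
  · intro h
    funext i
    fin_cases i
    · simpa [hat] using congrFun (congrFun h 2) 1
    · simpa [hat] using congrFun (congrFun h 0) 2
    · simpa [hat] using congrFun (congrFun h 1) 0
  · rintro rfl; rfl

lemma key1 (A : Matrix (Fin 3) (Fin 3) ℝ) (xi : Fin 3 → ℝ) :
    hat xi * A + Aᵀ * hat xi =
      hat ((Matrix.trace A • (1 : Matrix (Fin 3) (Fin 3) ℝ) - A).mulVec xi) := by
  ext i j
  fin_cases i <;> fin_cases j <;>
    · simp [hat, Matrix.mul_apply, Matrix.mulVec, Matrix.vecMul, Matrix.trace,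
        Matrix.diag, Fin.sum_univ_three, dotProduct, Matrix.one_apply]
      ring

lemma hat_sum {n : ℕ} (f : Fin n → Fin 3 → ℝ) :
    hat (∑ i : Fin n, f i) = ∑ i : Fin n, hat (f i) := by
  ext i j
  fin_cases i <;> fin_cases j <;>
    simp [hat, Finset.sum_apply, Matrix.sum_apply, Finset.sum_neg_distrib]

lemma key2one (a b : Fin 3 → ℝ) (c : ℝ) :
    c • (Matrix.vecMulVec b a - Matrix.vecMulVec a b) = hat (c • (hat a).mulVec b) := by
  ext i j
  fin_cases i <;> fin_cases j <;>
    · simp [hat, Matrix.vecMulVec_apply, Matrix.mulVec, dotProduct,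
        Fin.sum_univ_three]
      all_goals first | ring1 | (left; first | trivial | ring1) | (right; first | trivial | ring1)

lemma expand {n : ℕ} (X Y : Matrix (Fin 3) (Fin n) ℝ) (w : Fin n → ℝ)
    (R : Matrix (Fin 3) (Fin 3) ℝ) :
    X * Matrix.diagonal w * Yᵀ * R =
      ∑ k : Fin n, w k • Matrix.vecMulVec (fun l => X l k) (Rᵀ.mulVec fun l => Y l k) := by
  ext i j
  simp only [Matrix.mul_apply, Matrix.diagonal_apply, Matrix.transpose_apply,
    Matrix.vecMulVec_apply, Matrix.mulVec, dotProduct, Finset.sum_apply,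
    Matrix.sum_apply, Matrix.smul_apply, smul_eq_mul, Finset.sum_mul,
    Finset.mul_sum, ite_mul, mul_ite, zero_mul, mul_zero, Finset.sum_ite_eq,
    Finset.sum_ite_eq', Finset.mem_univ, if_true]
  rw [Finset.sum_comm]
  apply Finset.sum_congr rfl
  intro k _
  apply Finset.sum_congr rfl
  intro l _
  ring

lemma key2 (n : ℕ) (Rhat : Matrix (Fin 3) (Fin 3) ℝ)
    (E deltaB : Matrix (Fin 3) (Fin n) ℝ) (w : Fin n → ℝ) :
    deltaB * Matrix.diagonal w * Eᵀ * Rhat - Rhatᵀ * E * Matrix.diagonal w * deltaBᵀ =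
      hat (∑ i : Fin n, w i •
        (hat (Rhatᵀ.mulVec fun l => E l i)).mulVec fun l => deltaB l i) := by
  have h2 : Rhatᵀ * E * Matrix.diagonal w * deltaBᵀ =
      ∑ k : Fin n, w k •
        Matrix.vecMulVec (Rhatᵀ.mulVec fun l => E l k) (fun l => deltaB l k) := by
    have ht : (deltaB * Matrix.diagonal w * Eᵀ * Rhat)ᵀ
        = Rhatᵀ * E * Matrix.diagonal w * deltaBᵀ := by
      simp [Matrix.transpose_mul, Matrix.diagonal_transpose, Matrix.mul_assoc]
    rw [← ht, expand deltaB E w Rhat]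
    rw [Matrix.transpose_sum]
    apply Finset.sum_congr rfl
    intro k _
    rw [Matrix.transpose_smul]
    congr 1
    ext i j
    simp [Matrix.vecMulVec_apply, mul_comm]
  rw [expand deltaB E w Rhat, h2, hat_sum, ← Finset.sum_sub_distrib]
  apply Finset.sum_congr rfl
  intro k _
  rw [← key2one, smul_sub]

/-- Theorem 7 (left-invariant error case): the linearized optimality condition
`ξ^ R̂ᵀ L̃ + L̃ᵀ R̂ ξ^ = δB W Eᵀ R̂ - R̂ᵀ E W δBᵀ` holds iff
`(tr(R̂ᵀ L̃) I₃ - R̂ᵀ L̃) ξ = ∑ᵢ wⁱ (R̂ᵀ eⁱ)^ δbⁱ`. -/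
theorem stmt11 (n : ℕ) (Rhat : Matrix (Fin 3) (Fin 3) ℝ) (hR : SO3 Rhat)
    (E deltaB : Matrix (Fin 3) (Fin n) ℝ) (w : Fin n → ℝ)
    (W : Matrix (Fin n) (Fin n) ℝ) (hW : W = Matrix.diagonal w)
    (Ltilde : Matrix (Fin 3) (Fin 3) ℝ) (xi : Fin 3 → ℝ) :
    (hat xi * Rhatᵀ * Ltilde + Ltildeᵀ * Rhat * hat xi =
        deltaB * W * Eᵀ * Rhat - Rhatᵀ * E * W * deltaBᵀ) ↔
      (Matrix.trace (Rhatᵀ * Ltilde) • (1 : Matrix (Fin 3) (Fin 3) ℝ) -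
          Rhatᵀ * Ltilde).mulVec xi =
        ∑ i : Fin n, w i •
          (hat (Rhatᵀ.mulVec fun l => E l i)).mulVec fun l => deltaB l i := by
  subst hW
  have h1 : Ltildeᵀ * Rhat = (Rhatᵀ * Ltilde)ᵀ := by
    rw [Matrix.transpose_mul, Matrix.transpose_transpose]
  rw [Matrix.mul_assoc (hat xi), h1, key1, key2, hat_eq_iff]
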